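/- Let V be an n-dimensional vector space over a field K with n ≥ 3, and let s ≥ 2 satisfy C(s,2) < n. If ω is a non-degenerate alternating trilinear form on V and U ⊆ V is a 2-singular subspace for ω, then the codimension of U is at least s; equivalently, if U is 2-singular of codimension s', then C(s'+1,2) ≥ n. -/

import Mathlib

section helpers
variable {K V : Type*} [Field K] [AddCommGroup V] [Module K V]

lemma upd_0 (a b c x : V) : Function.update ![a,b,c] 0 x = ![x,b,c] := by
  ext i; fin_cases i <;> simp

lemma upd_1 (a b c x : V) : Function.update ![a,b,c] 1 x = ![a,x,c] := by
  ext i; fin_cases i <;> simp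

lemma upd_2 (a b c x : V) : Function.update ![a,b,c] 2 x = ![a,b,x] := by
  ext i; fin_cases i <;> simp

variable (ω : AlternatingMap K V K (Fin 3))

lemma tri_add0 (a a' b c : V) : ω ![a+a',b,c] = ω ![a,b,c] + ω ![a',b,c] := by
  have h := ω.map_update_add ![a,b,c] 0 a a'
  simpa [upd_0] using h

lemma tri_smul0 (r : K) (a b c : V) : ω ![r • a,b,c] = r • ω ![a,b,c] := by
  have h := ω.map_update_smul ![a,b,c] 0 r a
  simpa [upd_0] using h

lemma tri_add1 (a b b' c : V) : ω ![a,b+b',c] = ω ![a,b,c] + ω ![a,b',c] := by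
  have h := ω.map_update_add ![a,b,c] 1 b b'
  simpa [upd_1] using h

lemma tri_smul1 (r : K) (a b c : V) : ω ![a,r • b,c] = r • ω ![a,b,c] := by
  have h := ω.map_update_smul ![a,b,c] 1 r b
  simpa [upd_1] using h

lemma tri_add2 (a b c c' : V) : ω ![a,b,c+c'] = ω ![a,b,c] + ω ![a,b,c'] := by
  have h := ω.map_update_add ![a,b,c] 2 c c'
  simpa [upd_2] using h

lemma tri_smul2 (r : K) (a b c : V) : ω ![a,b,r • c] = r • ω ![a,b,c] := by
  have h := ω.map_update_smul ![a,b,c] 2 r c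
  simpa [upd_2] using h

def slot1 (b c : V) : V →ₗ[K] K where
  toFun a := ω ![a,b,c]
  map_add' x y := tri_add0 ω x y b c
  map_smul' r x := tri_smul0 ω r x b c

def slot2 (a c : V) : V →ₗ[K] K where
  toFun b := ω ![a,b,c]
  map_add' x y := tri_add1 ω a x y c
  map_smul' r x := tri_smul1 ω r a x c

def slot3 (a b : V) : V →ₗ[K] K where
  toFun c := ω ![a,b,c]
  map_add' x y := tri_add2 ω a b x y
  map_smul' r x := tri_smul2 ω r a b x

@[simp] lemma slot1_apply (a b c : V) : slot1 ω b c a = ω ![a,b,c] := rfl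
@[simp] lemma slot2_apply (a b c : V) : slot2 ω a c b = ω ![a,b,c] := rfl
@[simp] lemma slot3_apply (a b c : V) : slot3 ω a b c = ω ![a,b,c] := rfl

lemma tri_swap23 (a b c : V) : ω ![a,b,c] = - ω ![a,c,b] := by
  have h := ω.map_swap (v := ![a,c,b]) (show (1:Fin 3) ≠ 2 by decide)
  have e : (![a,c,b] ∘ Equiv.swap (1:Fin 3) 2) = ![a,b,c] := by
    ext i; fin_cases i <;> simp [Equiv.swap_apply_def]
  rw [e] at h
  rw [h]

lemma tri_eq_zero (a b : V) : ω ![a,b,b] = 0 :=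
  ω.map_eq_zero_of_eq ![a,b,b] (i := 1) (j := 2) rfl (by decide)

end helpers

theorem stmt13 {K V : Type*} [Field K] [AddCommGroup V] [Module K V]
    [FiniteDimensional K V] {n s : ℕ} (hn : Module.finrank K V = n)
    (h3 : 3 ≤ n) (hs : 2 ≤ s) (hsn : Nat.choose s 2 < n)
    (ω : AlternatingMap K V K (Fin 3))
    (hnd : ∀ v : V, (∀ w x : V, ω ![v, w, x] = 0) → v = 0)
    (U : Submodule K V)
    (hU : ∀ u ∈ U, ∀ u' ∈ U, ∀ v : V, ω ![u, u', v] = 0) :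
    s ≤ n - Module.finrank K U ∧
      n ≤ Nat.choose (n - Module.finrank K U + 1) 2 := by
  classical
  set m := Module.finrank K (V ⧸ U) with hmdef
  have hsum : m + Module.finrank K U = n := by
    rw [hmdef, Submodule.finrank_quotient_add_finrank, hn]
  -- basis of the quotient, lifted to V
  let b : Module.Basis (Fin m) K (V ⧸ U) := Module.finBasis K (V ⧸ U)
  have hsurj := U.mkQ_surjective
  choose v hv using fun i => hsurj (b i)
  -- decomposition of any vector
  have hdec : ∀ w : V, ∃ a : Fin m → K, w - ∑ i, a i • v i ∈ U := by
    intro w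
    refine ⟨fun i => b.repr (U.mkQ w) i, ?_⟩
    show w - ∑ i, b.repr (U.mkQ w) i • v i ∈ U
    have hmk : U.mkQ (∑ i, b.repr (U.mkQ w) i • v i) = U.mkQ w := by
      rw [map_sum]
      simp only [map_smul, hv]
      exact b.sum_repr (U.mkQ w)
    have h0 : U.mkQ (w - ∑ i, b.repr (U.mkQ w) i • v i) = 0 := by
      rw [map_sub, hmk, sub_self]
    exact (Submodule.Quotient.mk_eq_zero U).mp h0
  -- key: if ω ![u, v i, v j] = 0 for all i j, then u is in the radical
  have key : ∀ u ∈ U, (∀ i j : Fin m, ω ![(u:V), v i, v j] = 0) → u = 0 := by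
    intro u hu h0
    apply hnd
    intro w x
    obtain ⟨aw, hw⟩ := hdec w
    obtain ⟨ax, hx⟩ := hdec x
    have hx0 : ∀ i : Fin m, ω ![u, v i, x] = 0 := by
      intro i
      have : x = (∑ j, ax j • v j) + (x - ∑ j, ax j • v j) := by abel
      rw [this, tri_add2]
      have h1 : ω ![u, v i, ∑ j, ax j • v j] = 0 := by
        have := map_sum (slot3 ω u (v i)) (fun j => ax j • v j) Finset.univ
        simp only [slot3_apply] at this
        rw [this]
        refine Finset.sum_eq_zero fun j _ => ?_
        rw [tri_smul2, h0 i j, smul_zero]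
      have h2 : ω ![u, v i, x - ∑ j, ax j • v j] = 0 := by
        rw [tri_swap23, hU u hu _ hx (v i), neg_zero]
      rw [h1, h2, add_zero]
    have : w = (∑ i, aw i • v i) + (w - ∑ i, aw i • v i) := by abel
    rw [this, tri_add1]
    have h1 : ω ![u, ∑ i, aw i • v i, x] = 0 := by
      have := map_sum (slot2 ω u x) (fun i => aw i • v i) Finset.univ
      simp only [slot2_apply] at this
      rw [this]
      refine Finset.sum_eq_zero fun i _ => ?_
      rw [tri_smul1, hx0 i, smul_zero]
    rw [h1, hU u hu _ hw x, add_zero]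
  -- the injective linear map from U into functions on pairs i < j
  let I := Σ j : Fin m, Fin (j : ℕ)
  let g : U →ₗ[K] (I → K) :=
    LinearMap.pi fun p => (slot1 ω (v ⟨p.2.1, p.2.2.trans p.1.2⟩) (v p.1)).comp U.subtype
  have hginj : Function.Injective g := by
    rw [← LinearMap.ker_eq_bot]
    rw [LinearMap.ker_eq_bot']
    intro u hgu
    have hlt : ∀ i j : Fin m, (i : ℕ) < (j : ℕ) → ω ![(u:V), v i, v j] = 0 := by
      intro i j hij
      have := congrFun hgu ⟨j, ⟨i, hij⟩⟩
      simpa [g] using this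
    refine Subtype.ext (key u u.2 fun i j => ?_)
    rcases lt_trichotomy (i : ℕ) (j : ℕ) with h | h | h
    · exact hlt i j h
    · have : v i = v j := by congr 1; exact Fin.ext h
      rw [this]; exact tri_eq_zero ω _ _
    · rw [tri_swap23, hlt j i h, neg_zero]
  have hrank : Module.finrank K U ≤ Nat.choose m 2 := by
    have h1 := LinearMap.finrank_le_finrank_of_injective hginj
    rw [Module.finrank_pi, Fintype.card_sigma] at h1
    simp only [Fintype.card_fin] at h1
    rwa [Fin.sum_univ_eq_sum_range (fun x => x), Finset.sum_range_id,
      ← Nat.choose_two_right] at h1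
  have hne : n ≤ Nat.choose (m + 1) 2 := by
    have : Nat.choose (m+1) 2 = m + Nat.choose m 2 := by
      rw [Nat.choose_succ_succ, Nat.choose_one_right]
    omega
  have hsle : s ≤ m := by
    by_contra hc
    push_neg at hc
    have := Nat.choose_le_choose 2 (show m + 1 ≤ s by omega)
    omega
  constructor <;> [skip; skip] <;> (have hm' : n - Module.finrank K U = m := by omega)
  · omega
  · rw [hm']; exact hne
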